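/- For a pregraph H, the quotient pregraph H̄ is a graph (i.e., PN_H̄ is functional, PP_H̄ is functional, symmetric, and irreflexive) if and only if H contains no odd loop, i.e., no closed path (p₁, p₂, …, p_k) with p₁ = p_k and odd length k−1. -/

import Mathlib

/-- A pregraph: nodes, ports, a port-node relation, a symmetric port-port
relation, and an attribute function assigning sets of attributes to
nodes and ports. -/
structure Pregraph (N P A : Type) where
  PN : P → N → Prop
  PP : P → P → Prop
  pp_symm : ∀ p q, PP p q → PP q p
  att : N ⊕ P → Set A

namespace Pregraph

variable {N P A : Type}

/-- The port equivalence `≡^P = (PP ∘ PP)^*`. -/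
def portEquiv (H : Pregraph N P A) : P → P → Prop :=
  Relation.ReflTransGen (Relation.Comp H.PP H.PP)

/-- One step of the node relation: `PN⁻ ∘ ≡^P ∘ PN`. -/
def nodeStep (H : Pregraph N P A) : N → N → Prop :=
  fun n₁ n₂ => ∃ p₁ p₂, H.PN p₁ n₁ ∧ H.portEquiv p₁ p₂ ∧ H.PN p₂ n₂

/-- The node equivalence `≡^N = (PN⁻ ∘ ≡^P ∘ PN)^*`. -/
def nodeEquiv (H : Pregraph N P A) : N → N → Prop :=
  Relation.ReflTransGen H.nodeStep

/-- A graph: every port is associated to at most one node, linked to at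
most one port, and never linked to itself. -/
def IsGraph (G : Pregraph N P A) : Prop :=
  (∀ p n₁ n₂, G.PN p n₁ → G.PN p n₂ → n₁ = n₂) ∧
  (∀ p q₁ q₂, G.PP p q₁ → G.PP p q₂ → q₁ = q₂) ∧
  (∀ p, ¬ G.PP p p)

end Pregraph
theorem Pregraph.portEquiv_equivalence' {N P A : Type} (H : Pregraph N P A) :
    Equivalence H.portEquiv := by
  have hs : ∀ a b, Relation.Comp H.PP H.PP a b → Relation.Comp H.PP H.PP b a := by
    rintro a b ⟨c, h1, h2⟩
    exact ⟨c, H.pp_symm _ _ h2, H.pp_symm _ _ h1⟩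
  refine ⟨fun x => Relation.ReflTransGen.refl, ?_,
    fun h1 h2 => Relation.ReflTransGen.trans h1 h2⟩
  intro x y h
  induction h with
  | refl => exact Relation.ReflTransGen.refl
  | tail _ h2 ih =>
      exact Relation.ReflTransGen.trans (Relation.ReflTransGen.single (hs _ _ h2)) ih

theorem Pregraph.nodeEquiv_equivalence' {N P A : Type} (H : Pregraph N P A) :
    Equivalence H.nodeEquiv := by
  have hsym : ∀ {a b : P}, H.portEquiv a b → H.portEquiv b a :=
    fun h => (Pregraph.portEquiv_equivalence' H).symm h
  have hs : ∀ a b, H.nodeStep a b → H.nodeStep b a := by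
    rintro a b ⟨p₁, p₂, h1, h2, h3⟩
    exact ⟨p₂, p₁, h3, hsym h2, h1⟩
  refine ⟨fun x => Relation.ReflTransGen.refl, ?_,
    fun h1 h2 => Relation.ReflTransGen.trans h1 h2⟩
  intro x y h
  induction h with
  | refl => exact Relation.ReflTransGen.refl
  | tail _ h2 ih =>
      exact Relation.ReflTransGen.trans (Relation.ReflTransGen.single (hs _ _ h2)) ih

/-- The setoid of ports under `≡^P`. -/
def Pregraph.portSetoid {N P A : Type} (H : Pregraph N P A) : Setoid P :=
  ⟨H.portEquiv, Pregraph.portEquiv_equivalence' H⟩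

/-- The setoid of nodes under `≡^N`. -/
def Pregraph.nodeSetoid {N P A : Type} (H : Pregraph N P A) : Setoid N :=
  ⟨H.nodeEquiv, Pregraph.nodeEquiv_equivalence' H⟩

/-- The quotient pregraph `H̄`, whose nodes (resp. ports) are the `≡^N`
(resp. `≡^P`) classes, with the induced relations and attributes. -/
def Pregraph.quot {N P A : Type} (H : Pregraph N P A) :
    Pregraph (Quotient H.nodeSetoid) (Quotient H.portSetoid) A where
  PN := fun pc nc => ∃ p n, H.PN p n ∧ pc = Quotient.mk H.portSetoid p ∧
    nc = Quotient.mk H.nodeSetoid n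
  PP := fun pc qc => ∃ p q, H.PP p q ∧ pc = Quotient.mk H.portSetoid p ∧
    qc = Quotient.mk H.portSetoid q
  pp_symm := by
    rintro a b ⟨p, q, h, rfl, rfl⟩
    exact ⟨q, p, H.pp_symm _ _ h, rfl, rfl⟩
  att := Sum.elim
    (fun nc => {a | ∃ n, nc = Quotient.mk H.nodeSetoid n ∧ a ∈ H.att (Sum.inl n)})
    (fun pc => {a | ∃ p, pc = Quotient.mk H.portSetoid p ∧ a ∈ H.att (Sum.inr p)})

/-- Pregraph homomorphisms (built over an attribute homomorphism `fA`). -/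
structure Pregraph.Hom {N P A N' P' A' : Type}
    (H : Pregraph N P A) (H' : Pregraph N' P' A') where
  fN : N → N'
  fP : P → P'
  fA : A → A'
  mapPN : ∀ p n, H.PN p n → H'.PN (fP p) (fN n)
  mapPP : ∀ p q, H.PP p q → H'.PP (fP p) (fP q)
  mapAtt : ∀ x a, a ∈ H.att x → fA a ∈ H'.att (Sum.map fN fP x)

/-- Two pregraphs are isomorphic when there are mutually inverse
homomorphisms between them. -/
def Pregraph.Isomorphic {N P A N' P' A' : Type}
    (H : Pregraph N P A) (H' : Pregraph N' P' A') : Prop :=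
  ∃ (f : Pregraph.Hom H H') (g : Pregraph.Hom H' H),
    (∀ n, g.fN (f.fN n) = n) ∧ (∀ p, g.fP (f.fP p) = p) ∧ (∀ a, g.fA (f.fA a) = a) ∧
    (∀ n, f.fN (g.fN n) = n) ∧ (∀ p, f.fP (g.fP p) = p) ∧ (∀ a, f.fA (g.fA a) = a)

/-- `H` has an odd loop: a closed path (first port = last port) whose
length is odd. -/
def Pregraph.HasOddLoop {N P A : Type} (H : Pregraph N P A) : Prop :=
  ∃ l : List P, l ≠ [] ∧ l.Chain' H.PP ∧ l.head? = l.getLast? ∧ Odd (l.length - 1)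

/-- Shifting a port-equivalence by one `PP` edge on each side. -/
theorem Pregraph.portEquiv_shift {N P A : Type} (H : Pregraph N P A) {p p' : P}
    (h : H.portEquiv p p') :
    ∀ q₁ q₂, H.PP q₁ p → H.PP p' q₂ → H.portEquiv q₁ q₂ := by
  induction h using Relation.ReflTransGen.head_induction_on with
  | refl =>
    intro q₁ q₂ h1 h2
    exact Relation.ReflTransGen.single ⟨_, h1, h2⟩
  | head hstep _ ih =>
    intro q₁ q₂ h1 h2
    obtain ⟨m, ham, hmc⟩ := hstep
    exact Relation.ReflTransGen.trans
      (Relation.ReflTransGen.single ⟨_, h1, ham⟩) (ih _ _ hmc h2)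

/-- An even-length `PP`-walk yields a port equivalence. -/
theorem Pregraph.walk_equiv {N P A : Type} (H : Pregraph N P A) :
    ∀ (l : List P) (a b : P), l.Chain' H.PP → l.head? = some a →
      l.getLast? = some b → Even (l.length - 1) → H.portEquiv a b
  | [], a, b, _, hh, _, _ => by simp at hh
  | [x], a, b, _, hh, hl, _ => by
    simp only [List.head?, List.getLast?_singleton, Option.some.injEq] at hh hl
    cases hh; cases hl; exact Relation.ReflTransGen.refl
  | [x, y], a, b, _, hh, hl, hev => by
    simp at hev
  | x :: y :: z :: rest, a, b, hc, hh, hl, hev => by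
    simp only [List.head?, Option.some.injEq] at hh
    subst hh
    unfold List.Chain' at hc
    rw [List.isChain_cons_cons] at hc
    obtain ⟨hxy, hc⟩ := hc
    rw [List.isChain_cons_cons] at hc
    obtain ⟨hyz, hc⟩ := hc
    rw [List.getLast?_cons_cons, List.getLast?_cons_cons] at hl
    have hev' : Even ((z :: rest).length - 1) := by
      simp only [List.length_cons] at hev ⊢
      rcases hev with ⟨k, hk⟩
      exact ⟨k - 1, by omega⟩
    exact Relation.ReflTransGen.head ⟨y, hxy, hyz⟩
      (Pregraph.walk_equiv H (z :: rest) z b hc rfl hl hev')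

/-- A port equivalence yields an even-length `PP`-walk. -/
theorem Pregraph.equiv_walk {N P A : Type} (H : Pregraph N P A) {a b : P}
    (h : H.portEquiv a b) :
    ∃ l : List P, l.Chain' H.PP ∧ l.head? = some a ∧ l.getLast? = some b ∧
      Even (l.length - 1) := by
  induction h with
  | refl => exact ⟨[a], List.isChain_singleton _, rfl, rfl, by simp⟩
  | @tail b' c' _ hstep ih =>
    obtain ⟨l, hc, hh, hl, he⟩ := ih
    obtain ⟨m, h1, h2⟩ := hstep
    have hne : l ≠ [] := by intro h; subst h; simp at hh
    refine ⟨l ++ [m, c'], ?_, ?_, ?_, ?_⟩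
    · unfold List.Chain'
      rw [List.isChain_append]
      refine ⟨hc, by simp [h2], ?_⟩
      intro x hx y hy
      rw [hl, Option.mem_some_iff] at hx
      simp only [List.head?, Option.mem_some_iff] at hy
      subst hx; subst hy; exact h1
    · rwa [List.head?_append_of_ne_nil _ hne]
    · rw [show l ++ [m, c'] = (l ++ [m]) ++ [c'] by simp, List.getLast?_concat]
    · obtain ⟨k, hk⟩ : ∃ k, l.length = k + 1 :=
        ⟨l.length - 1, (Nat.succ_pred_eq_of_pos (List.length_pos_iff.2 hne)).symm⟩
      rw [hk] at he
      simp only [List.length_append, List.length_cons, List.length_nil, hk]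
      simp only [Nat.add_sub_cancel] at he ⊢
      rcases he with ⟨m, hm⟩
      exact ⟨m + 1, by omega⟩

/-- the quotient pregraph `H̄` is a graph iff `H` has no odd
loop. -/
theorem quot_isGraph_iff_no_odd_loop {N P A : Type} [Fintype N] [Fintype P]
    (H : Pregraph N P A) :
    H.quot.IsGraph ↔ ¬ H.HasOddLoop := by
  constructor
  · rintro ⟨_, _, hirr⟩ ⟨l, hne, hc, hhl, hodd⟩
    match l, hne, hc, hhl, hodd with
    | [x], _, _, _, hodd => simp at hodd
    | x :: y :: rest, _, hc, hhl, hodd =>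
      unfold List.Chain' at hc
      rw [List.isChain_cons_cons] at hc
      obtain ⟨hxy, hc⟩ := hc
      simp only [List.head?, List.getLast?_cons_cons] at hhl
      have hev : Even ((y :: rest).length - 1) := by
        simp only [List.length_cons] at hodd ⊢
        rcases hodd with ⟨k, hk⟩
        exact ⟨k, by omega⟩
      have heq : H.portEquiv y x :=
        H.walk_equiv (y :: rest) y x hc rfl hhl.symm hev
      exact hirr (Quotient.mk H.portSetoid x)
        ⟨x, y, hxy, rfl, (Quotient.sound heq).symm⟩
  · intro hno
    refine ⟨?_, ?_, ?_⟩
    · rintro pc n₁ n₂ ⟨p, n, hpn, rfl, rfl⟩ ⟨p', n', hpn', hpc, rfl⟩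
      exact Quotient.sound
        (Relation.ReflTransGen.single ⟨p, p', hpn, Quotient.exact hpc, hpn'⟩)
    · rintro pc q₁ q₂ ⟨p, q, hpq, rfl, rfl⟩ ⟨p', q', hpq', hpc, rfl⟩
      exact Quotient.sound
        (H.portEquiv_shift (Quotient.exact hpc) q q' (H.pp_symm _ _ hpq) hpq')
    · rintro pc ⟨p, q, hpq, rfl, hpc⟩
      have heq : H.portEquiv p q := Quotient.exact hpc
      obtain ⟨l, hc, hh, hl, he⟩ := H.equiv_walk heq
      have hne : l ≠ [] := by intro h; subst h; simp at hh
      refine hno ⟨l ++ [p], by simp, ?_, ?_, ?_⟩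
      · unfold List.Chain'
        rw [List.isChain_append]
        refine ⟨hc, by simp, ?_⟩
        intro x hx y hy
        rw [hl, Option.mem_some_iff] at hx
        simp only [List.head?, Option.mem_some_iff] at hy
        subst hx; subst hy; exact H.pp_symm _ _ hpq
      · rw [List.head?_append_of_ne_nil _ hne, List.getLast?_concat, hh]
      · obtain ⟨k, hk⟩ : ∃ k, l.length = k + 1 :=
          ⟨l.length - 1, (Nat.succ_pred_eq_of_pos (List.length_pos_iff.2 hne)).symm⟩
        rw [hk] at he
        simp only [Nat.add_sub_cancel] at he
        simp only [List.length_append, List.length_cons, List.length_nil, hk,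
          Nat.add_sub_cancel]
        rcases he with ⟨m, hm⟩
        exact ⟨m, by omega⟩
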